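/- (Spatially homogeneous case of Proposition 3.1(b).) Let α_h, β_h, α_v, β_v > 0 satisfy α_h α_v > β_h β_v, let m(z) = α_v z/(α_v z + β_v), F(z) = α_h(1−z)m(z) − β_h z, and z* = (α_h α_v − β_h β_v)/(α_v(α_h + β_h)). Let z : [0,∞) → ℝ be differentiable with z′(t) = F(z(t)) for all t ≥ 0 and z(0) ∈ (0,1]. Then z(t) ∈ (0,1] for all t ≥ 0 and z(t) → z* as t → ∞. -/

import Mathlib

open Real Filter

open Topology

lemma trap_above (f z : ℝ → ℝ) (b : ℝ)
    (hz : ∀ t ∈ Set.Ici (0:ℝ), HasDerivWithinAt z (f (z t)) (Set.Ici 0) t)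
    (hfb : f b < 0) (h0 : z 0 ≤ b) :
    ∀ t ∈ Set.Ici (0:ℝ), z t ≤ b := by
  have hcont : ContinuousOn z (Set.Ici 0) := fun t ht => (hz t ht).continuousWithinAt
  by_contra h
  push_neg at h
  obtain ⟨T, hT, hbT⟩ := h
  set S := {t : ℝ | t ∈ Set.Icc 0 T ∧ z t ≤ b} with hS
  have h0S : (0:ℝ) ∈ S := ⟨⟨le_refl 0, hT⟩, h0⟩
  have hSne : S.Nonempty := ⟨0, h0S⟩
  have hSbdd : BddAbove S := ⟨T, fun x hx => hx.1.2⟩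
  have hSclosed : IsClosed S := by
    have hEq : S = Set.Icc 0 T ∩ z ⁻¹' Set.Iic b := by
      ext x; simp [hS, Set.mem_Icc, and_assoc]
    rw [hEq]
    exact (hcont.mono (fun x hx => hx.1)).preimage_isClosed_of_isClosed isClosed_Icc isClosed_Iic
  have hsS : sSup S ∈ S := hSclosed.csSup_mem hSne hSbdd
  set s := sSup S with hs
  have hs0 : (0:ℝ) ≤ s := le_csSup hSbdd h0S
  have hsT : s ≤ T := hsS.1.2
  have hsb : z s ≤ b := hsS.2
  have hsltT : s < T := hsT.lt_of_ne (fun h => absurd (h ▸ hsS.2) (not_le.mpr hbT))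
  have hgt : ∀ t ∈ Set.Ioc s T, b < z t := by
    intro t ht
    by_contra hle
    push_neg at hle
    have htS : t ∈ S := ⟨⟨hs0.trans ht.1.le, ht.2⟩, hle⟩
    exact absurd (le_csSup hSbdd htS) (not_le.mpr ht.1)
  have hne : (𝓝[Set.Ioc s T] s).NeBot := left_nhdsWithin_Ioc_neBot hsltT
  have hzs : z s = b := by
    refine le_antisymm hsb ?_
    have htend : Tendsto z (𝓝[Set.Ioc s T] s) (𝓝 (z s)) :=
      (hcont s hs0).mono (fun x hx => hs0.trans hx.1.le)
    exact ge_of_tendsto htend (Filter.eventually_of_mem self_mem_nhdsWithin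
      (fun t ht => (hgt t ht).le))
  have hd : HasDerivWithinAt z (f (z s)) (Set.Ioc s T) s :=
    (hz s hs0).mono (fun x hx => hs0.trans hx.1.le)
  rw [hasDerivWithinAt_iff_tendsto_slope,
    Set.diff_singleton_eq_self (by simp : s ∉ Set.Ioc s T)] at hd
  have hge : 0 ≤ f (z s) := by
    refine ge_of_tendsto hd ?_
    refine Filter.eventually_of_mem self_mem_nhdsWithin (fun t ht => ?_)
    have h1 : s < t := ht.1
    have h2 : z s < z t := by rw [hzs]; exact hgt t ht
    rw [slope_def_field]
    exact div_nonneg (by linarith) (by linarith)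
  rw [hzs] at hge
  linarith

lemma trap_below (f z : ℝ → ℝ) (a : ℝ)
    (hz : ∀ t ∈ Set.Ici (0:ℝ), HasDerivWithinAt z (f (z t)) (Set.Ici 0) t)
    (hfa : 0 < f a) (h0 : a ≤ z 0) :
    ∀ t ∈ Set.Ici (0:ℝ), a ≤ z t := by
  have key := trap_above (fun x => -f (2*a - x)) (fun t => 2*a - z t) a
    (fun t ht => by
      have h1 := (hz t ht).const_sub (2*a)
      have h2 : ∀ x : ℝ, 2*a - (2*a - x) = x := fun x => by ring
      simpa [h2] using h1)
    (by
      have h3 : 2*a - a = a := by ring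
      simp only [h3]
      linarith)
    (by show 2*a - z 0 ≤ a; linarith)
  intro t ht
  have := key t ht
  linarith

/-- spatially homogeneous case of Proposition 3.1(b): under (H_C),
every solution of z' = F(z) = α_h(1-z)m(z) - β_h z with z(0) ∈ (0,1] stays in (0,1]
and converges to z* = (α_h α_v - β_h β_v)/(α_v(α_h + β_h)) as t → ∞. -/
theorem stmt14 (αh βh αv βv : ℝ) (hαh : 0 < αh) (hβh : 0 < βh) (hαv : 0 < αv)
    (hβv : 0 < βv) (hC : βh * βv < αh * αv)
    (z : ℝ → ℝ)
    (hz : ∀ t ∈ Set.Ici (0 : ℝ),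
      HasDerivWithinAt z
        (αh * (1 - z t) * (αv * z t / (αv * z t + βv)) - βh * z t) (Set.Ici 0) t)
    (hz0 : z 0 ∈ Set.Ioc (0 : ℝ) 1) :
    (∀ t ∈ Set.Ici (0 : ℝ), z t ∈ Set.Ioc (0 : ℝ) 1) ∧
    Tendsto z atTop (nhds ((αh * αv - βh * βv) / (αv * (αh + βh)))) := by
  obtain ⟨hz0pos, hz0le⟩ := hz0
  set f : ℝ → ℝ := fun x => αh * (1 - x) * (αv * x / (αv * x + βv)) - βh * x with hf
  set zs : ℝ := (αh * αv - βh * βv) / (αv * (αh + βh)) with hzsdef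
  have hA : 0 < αv * (αh + βh) := by positivity
  have hzspos : 0 < zs := div_pos (by linarith) hA
  have hzslt1 : zs < 1 := by
    rw [hzsdef, div_lt_one hA]; nlinarith
  set δ : ℝ := min (z 0) zs / 2 with hδdef
  have hminpos : 0 < min (z 0) zs := lt_min hz0pos hzspos
  have hδpos : 0 < δ := by rw [hδdef]; linarith
  have hδz0 : δ ≤ z 0 := by
    have := min_le_left (z 0) zs; rw [hδdef]; linarith
  have hδzs : δ < zs := by
    have := min_le_right (z 0) zs; rw [hδdef]; linarith
  have hδlt1 : δ < 1 := lt_trans hδzs hzslt1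
  -- key identity for f
  have hFid : ∀ x : ℝ, 0 < αv * x + βv →
      f x = (αv * (αh + βh)) * x * (zs - x) / (αv * x + βv) := by
    intro x hx
    rw [hf, hzsdef]
    have hx' : x * αv + βv ≠ 0 := by rw [mul_comm]; exact hx.ne'
    field_simp
    ring
  -- trapping
  have hzform : ∀ t ∈ Set.Ici (0:ℝ), HasDerivWithinAt z (f (z t)) (Set.Ici 0) t := hz
  have hfδ : 0 < f δ := by
    have hd : 0 < αv * δ + βv := by positivity
    rw [hFid δ hd]
    apply div_pos _ hd
    have : 0 < zs - δ := by linarith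
    positivity
  have hf1 : f 1 < 0 := by
    have hd : 0 < αv * 1 + βv := by positivity
    rw [hFid 1 hd]
    apply div_neg_of_neg_of_pos _ hd
    have h1 : zs - 1 < 0 := by linarith
    nlinarith
  have hub := trap_above f z 1 hzform hf1 hz0le
  have hlb := trap_below f z δ hzform hfδ hδz0
  have hmem : ∀ t ∈ Set.Ici (0:ℝ), z t ∈ Set.Ioc (0:ℝ) 1 :=
    fun t ht => ⟨lt_of_lt_of_le hδpos (hlb t ht), hub t ht⟩
  refine ⟨hmem, ?_⟩
  -- convergence via Lyapunov function
  set k : ℝ := αv * (αh + βh) * δ / (αv + βv) with hkdef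
  have hk : 0 < k := by positivity
  set W : ℝ → ℝ := fun t => (z t - zs)^2 * Real.exp (2*k*t) with hW
  have hcont : ContinuousOn z (Set.Ici 0) := fun t ht => (hz t ht).continuousWithinAt
  have hWcont : ContinuousOn W (Set.Ici 0) := by
    apply ContinuousOn.mul
    · exact ((hcont.sub continuousOn_const).pow 2)
    · exact (Real.continuous_exp.comp (continuous_const.mul continuous_id)).continuousOn
  have hWderiv : ∀ t ∈ Set.Ioi (0:ℝ), HasDerivAt W
      ((2*(z t - zs)*(f (z t)) + (z t - zs)^2 * (2*k)) * Real.exp (2*k*t)) t := by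
    intro t ht
    have ht' : (0:ℝ) ≤ t := le_of_lt ht
    have hz' : HasDerivAt z (f (z t)) t :=
      (hzform t ht').hasDerivAt (Ici_mem_nhds ht)
    have h1 : HasDerivAt (fun t => (z t - zs)^2) (2*(z t - zs)*(f (z t))) t := by
      have h := ((hz'.sub_const zs).fun_pow 2)
      refine h.congr_deriv ?_
      push_cast
      ring
    have h2 : HasDerivAt (fun t => Real.exp (2*k*t)) (Real.exp (2*k*t) * (2*k)) t := by
      have hlin : HasDerivAt (fun t : ℝ => 2*k*t) (2*k) t := by
        simpa using (hasDerivAt_id t).const_mul (2*k)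
      exact hlin.exp
    have := h1.fun_mul h2
    refine this.congr_deriv ?_
    ring
  have hWnonpos : ∀ t ∈ Set.Ioi (0:ℝ),
      (2*(z t - zs)*(f (z t)) + (z t - zs)^2 * (2*k)) * Real.exp (2*k*t) ≤ 0 := by
    intro t ht
    have ht' : (0:ℝ) ≤ t := le_of_lt ht
    have hzt1 : z t ≤ 1 := hub t ht'
    have hztδ : δ ≤ z t := hlb t ht'
    have hd : 0 < αv * z t + βv := by nlinarith
    apply mul_nonpos_of_nonpos_of_nonneg _ (Real.exp_pos _).le
    rw [hFid (z t) hd, ← mul_div_assoc]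
    rw [div_add' _ _ _ (ne_of_gt hd), div_nonpos_iff]
    right
    refine ⟨?_, hd.le⟩
    -- 2(u) * (A x (zs - x)) + u^2 * 2k * (αv x + βv) ≤ 0
    have h1 : δ * (αv * z t + βv) ≤ z t * (αv + βv) := by
      nlinarith [mul_nonneg (mul_nonneg hαv.le (by linarith : (0:ℝ) ≤ z t))
        (by linarith : (0:ℝ) ≤ 1 - δ), mul_nonneg hβv.le (by linarith : (0:ℝ) ≤ z t - δ)]
    have hkd : k * (αv * z t + βv) ≤ αv * (αh + βh) * z t := by
      rw [hkdef, div_mul_eq_mul_div, div_le_iff₀ (by positivity : (0:ℝ) < αv + βv)]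
      nlinarith [mul_le_mul_of_nonneg_left h1 hA.le]
    nlinarith [mul_nonneg (sub_nonneg.mpr hkd) (sq_nonneg (z t - zs))]
  have hanti : AntitoneOn W (Set.Ici 0) := by
    apply antitoneOn_of_deriv_nonpos (convex_Ici 0) hWcont
    · intro x hx
      rw [interior_Ici] at hx
      exact (hWderiv x hx).differentiableAt.differentiableWithinAt
    · intro x hx
      rw [interior_Ici] at hx
      rw [(hWderiv x hx).deriv]
      exact hWnonpos x hx
  have hWbound : ∀ t : ℝ, 0 ≤ t → (z t - zs)^2 * Real.exp (2*k*t) ≤ (z 0 - zs)^2 := by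
    intro t ht
    have := hanti (Set.self_mem_Ici) ht ht
    rw [hW] at this
    simpa using this
  have habs : ∀ t : ℝ, 0 ≤ t → |z t - zs| ≤ |z 0 - zs| * Real.exp (-(k*t)) := by
    intro t ht
    have h1 := hWbound t ht
    have hexp : (0:ℝ) < Real.exp (2*k*t) := Real.exp_pos _
    have hee : Real.exp (-(k*t)) ^ 2 * Real.exp (2*k*t) = 1 := by
      rw [sq, ← Real.exp_add, ← Real.exp_add,
        show -(k*t) + -(k*t) + 2*k*t = 0 by ring, Real.exp_zero]
    have h2 : (z t - zs)^2 ≤ ((z 0 - zs) * Real.exp (-(k*t)))^2 := by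
      rw [mul_pow]
      calc (z t - zs)^2 = (z t - zs)^2 * (Real.exp (-(k*t))^2 * Real.exp (2*k*t)) := by
            rw [hee, mul_one]
        _ = ((z t - zs)^2 * Real.exp (2*k*t)) * Real.exp (-(k*t))^2 := by ring
        _ ≤ (z 0 - zs)^2 * Real.exp (-(k*t))^2 :=
            mul_le_mul_of_nonneg_right h1 (sq_nonneg _)
    calc |z t - zs| = Real.sqrt ((z t - zs)^2) := (Real.sqrt_sq_eq_abs _).symm
      _ ≤ Real.sqrt (((z 0 - zs) * Real.exp (-(k*t)))^2) := Real.sqrt_le_sqrt h2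
      _ = |(z 0 - zs) * Real.exp (-(k*t))| := Real.sqrt_sq_eq_abs _
      _ = |z 0 - zs| * Real.exp (-(k*t)) := by
          rw [abs_mul, abs_of_pos (Real.exp_pos _)]
  have hexp0 : Tendsto (fun t : ℝ => |z 0 - zs| * Real.exp (-(k*t))) atTop (𝓝 0) := by
    have h1 : Tendsto (fun t : ℝ => k*t) atTop atTop :=
      Tendsto.const_mul_atTop hk tendsto_id
    have h2 : Tendsto (fun t : ℝ => Real.exp (-(k*t))) atTop (𝓝 0) :=
      Real.tendsto_exp_atBot.comp (tendsto_neg_atTop_atBot.comp h1)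
    have h3 := h2.const_mul |z 0 - zs|
    rw [mul_zero] at h3
    exact h3
  have hto0 : Tendsto (fun t => |z t - zs|) atTop (𝓝 0) := by
    apply squeeze_zero' (Filter.Eventually.of_forall (fun t => abs_nonneg _))
      _ hexp0
    filter_upwards [eventually_ge_atTop (0:ℝ)] with t ht
    exact habs t ht
  rw [tendsto_iff_dist_tendsto_zero]
  exact hto0.congr (fun t => (Real.dist_eq (z t) zs).symm)
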